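/- For the target block diagonal affinity matrix W, the characteristic polynomial of the Laplacian matrix L equals X^K · ∏_{i=1}^{K} (X − N_i w_i)^{N_i − 1}; that is, the eigenvalues of L, counted with multiplicity, consist of K zeros together with, for each block i, the value N_i w_i repeated N_i − 1 times. -/

import Mathlib

open Polynomial Matrix Finset


/-- det of matrix with `a` on diagonal, `b` off diagonal, over a field. -/
lemma detA {F : Type*} [Field F] {ι : Type*} [DecidableEq ι] [Fintype ι]
    (a b : F) (hab : a - b ≠ 0) (h1 : 1 ≤ Fintype.card ι) :
    (Matrix.of fun i j : ι => if i = j then a else b).det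
      = (a - b) ^ (Fintype.card ι - 1) * (a + ((Fintype.card ι : F) - 1) * b) := by
  have hM : (Matrix.of fun i j : ι => if i = j then a else b)
      = (a - b) • (1 + Matrix.replicateCol Unit (fun _ : ι => b / (a - b)) * Matrix.replicateRow Unit (fun _ : ι => (1:F))) := by
    ext i j
    by_cases h : i = j
    · subst h
      simp [Matrix.mul_apply, Matrix.one_apply]
      field_simp
      ring
    · simp [Matrix.mul_apply, Matrix.one_apply, h]
      field_simp
  rw [hM, Matrix.det_smul, Matrix.det_one_add_replicateCol_mul_replicateRow]
  have hd : (fun _ : ι => (1:F)) ⬝ᵥ (fun _ => b / (a - b)) = (Fintype.card ι : F) * (b / (a-b)) := by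
    simp [dotProduct, Finset.card_univ]
  rw [hd]
  have hc : (a - b) ^ Fintype.card ι = (a - b) ^ (Fintype.card ι - 1) * (a - b) := by
    rw [← pow_succ, Nat.sub_add_cancel h1]
  rw [hc, mul_assoc]
  congr 1
  field_simp
  ring

/-- det of each block of the characteristic matrix. -/
lemma detBlock {ι : Type*} [DecidableEq ι] [Fintype ι] (k : ℕ) (hk : Fintype.card ι = k)
    (h1 : 1 ≤ k) (w : ℝ) :
    (Matrix.of fun i j : ι => if i = j then (X : ℝ[X]) - C (((k : ℝ) - 1) * w) else C w).det
      = (X - C ((k : ℝ) * w)) ^ (k - 1) * X := by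
  set a : ℝ[X] := X - C (((k : ℝ) - 1) * w) with ha
  set b : ℝ[X] := C w with hb
  set φ := algebraMap ℝ[X] (RatFunc ℝ) with hφ
  have φinj : Function.Injective φ := IsFractionRing.injective _ _
  have hab : a - b = X - C ((k : ℝ) * w) := by
    rw [ha, hb, sub_sub, ← C_add]
    ring_nf
  have habne : a - b ≠ 0 := by
    rw [hab]
    exact X_sub_C_ne_zero _
  have hX : a + ((k : ℝ[X]) - 1) * b = X := by
    rw [ha, hb, ← C_eq_natCast, ← C_1, ← C_sub, ← C_mul]
    ring
  apply φinj
  rw [RingHom.map_det]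
  have hmap : (Matrix.of fun i j : ι => if i = j then a else b).map φ
      = Matrix.of fun i j : ι => if i = j then φ a else φ b := by
    ext i j
    simp [apply_ite φ]
  rw [RingHom.mapMatrix_apply, hmap, detA (φ a) (φ b) (by rw [← map_sub]; exact fun h => habne (φinj (by simpa using h)))
      (by omega)]
  rw [← _root_.map_sub φ, hk, _root_.map_mul φ, _root_.map_pow φ, ← hab]
  congr 1
  rw [← hX]; simp



/-- For the target block diagonal affinity matrix `W`, the characteristic
polynomial of the Laplacian matrix `L` equals `X ^ K * ∏ i, (X - C (n i * w i)) ^ (n i - 1)`;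
that is, the eigenvalues of `L`, counted with multiplicity, consist of `K` zeros together
with, for each block `i`, the value `n i * w i` repeated `n i - 1` times. -/
theorem target_laplacian_charpoly
    (K : ℕ) (hK : 1 ≤ K)
    (n : Fin K → ℕ) (hn : ∀ i, 2 ≤ n i)
    (w : Fin K → ℝ) (hw : ∀ i, 0 < w i)
    (N : ℕ) (hN : N = ∑ i, n i)
    (β : Fin N → Fin K)
    (hβ : ∀ m : Fin N,
      (∑ k ∈ Finset.univ.filter (fun k => k < β m), n k) ≤ m.val ∧
      m.val < (∑ k ∈ Finset.univ.filter (fun k => k < β m), n k) + n (β m))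
    (W : Matrix (Fin N) (Fin N) ℝ)
    (hW : ∀ m p, W m p = if m ≠ p ∧ β m = β p then w (β m) else 0)
    (D : Matrix (Fin N) (Fin N) ℝ)
    (hD : D = Matrix.diagonal (fun m => ∑ p, W m p))
    (L : Matrix (Fin N) (Fin N) ℝ)
    (hL : L = D - W) :
    L.charpoly =
      Polynomial.X ^ K *
        ∏ i, (Polynomial.X - Polynomial.C ((n i : ℝ) * w i)) ^ (n i - 1) := by
  classical
  -- fiber cardinalities
  have key : ∀ k, (Finset.univ.filter fun m : Fin N => β m = k).card = n k := by
    have hle : ∀ k ∈ Finset.univ, (Finset.univ.filter fun m : Fin N => β m = k).card ≤ n k := by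
      intro k _
      have : (Finset.univ.filter fun m : Fin N => β m = k).card ≤ (Finset.range (n k)).card := by
        apply Finset.card_le_card_of_injOn (fun m => m.val - ∑ j ∈ Finset.univ.filter (fun j => j < k), n j)
        · intro m hm
          simp only [Finset.mem_coe, Finset.mem_filter, Finset.mem_univ, true_and] at hm
          have h := hβ m
          rw [hm] at h
          simp only [Finset.mem_coe, Finset.mem_range]
          omega
        · intro m hm m' hm' hmm
          simp only [Finset.mem_coe, Finset.mem_filter, Finset.mem_univ, true_and] at hm hm'
          have h := hβ m
          have h' := hβ m'
          rw [hm] at h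
          rw [hm'] at h'
          simp only at hmm
          have : m.val = m'.val := by omega
          exact Fin.ext this
      simpa using this
    have hsum : ∑ k, (Finset.univ.filter fun m : Fin N => β m = k).card = ∑ k, n k := by
      rw [← hN]
      have := Finset.card_eq_sum_card_fiberwise
        (f := β) (s := Finset.univ) (t := Finset.univ) (fun x _ => Finset.mem_univ _)
      simpa using this.symm
    intro k
    exact (Finset.sum_eq_sum_iff_of_le hle).mp hsum k (Finset.mem_univ k)
  -- row sums
  have rowsum : ∀ m, (∑ p, W m p) = ((n (β m) : ℝ) - 1) * w (β m) := by
    intro m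
    simp only [hW]
    rw [← Finset.sum_filter]
    have hset : (Finset.univ.filter fun p : Fin N => m ≠ p ∧ β m = β p)
        = (Finset.univ.filter fun p : Fin N => β p = β m).erase m := by
      ext p
      simp only [Finset.mem_filter, Finset.mem_univ, true_and, Finset.mem_erase]
      constructor
      · rintro ⟨h1, h2⟩; exact ⟨fun h => h1 h.symm, h2.symm⟩
      · rintro ⟨h1, h2⟩; exact ⟨fun h => h1 h.symm, h2.symm⟩
    rw [hset, Finset.sum_const, Finset.card_erase_of_mem (by simp), key (β m)]
    have h2 : 2 ≤ n (β m) := hn _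
    rw [nsmul_eq_mul]
    rw [Nat.cast_sub (by omega), Nat.cast_one]
  -- entries of L
  have Ldiag : ∀ m, L m m = ((n (β m) : ℝ) - 1) * w (β m) := by
    intro m
    rw [hL, hD]
    simp [Matrix.diagonal_apply_eq, hW m m, rowsum m]
  have Loff : ∀ m p, m ≠ p → β m = β p → L m p = -(w (β m)) := by
    intro m p hmp hb
    rw [hL, hD]
    simp [Matrix.diagonal_apply_ne _ hmp, hW m p, hmp, hb]
  have Lzero : ∀ m p, β m ≠ β p → L m p = 0 := by
    intro m p hb
    have hmp : m ≠ p := fun h => hb (by rw [h])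
    rw [hL, hD]
    simp [Matrix.diagonal_apply_ne _ hmp, hW m p, hb]
  -- block triangularity
  have hbt : (Matrix.charmatrix L).BlockTriangular β := by
    intro m p h
    have hb : β m ≠ β p := fun e => absurd e.symm (ne_of_lt h)
    have hmp : m ≠ p := fun e => hb (by rw [e])
    rw [Matrix.charmatrix_apply_ne _ _ _ hmp, Lzero m p hb, map_zero, neg_zero]
  have hcp : L.charpoly = ∏ k : Fin K, ((Matrix.charmatrix L).toSquareBlock β k).det :=
    hbt.det_fintype
  rw [hcp]
  have hblock : ∀ k : Fin K, ((Matrix.charmatrix L).toSquareBlock β k).det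
      = (X - C ((n k : ℝ) * w k)) ^ (n k - 1) * X := by
    intro k
    have hcard : Fintype.card {m // β m = k} = n k := by
      rw [Fintype.card_subtype]
      exact key k
    have hbm : (Matrix.charmatrix L).toSquareBlock β k
        = Matrix.of fun i j : {m // β m = k} =>
            if i = j then (X : ℝ[X]) - C (((n k : ℝ) - 1) * w k) else C (w k) := by
      apply Matrix.ext
      intro i j
      rw [Matrix.toSquareBlock_def]
      by_cases h : i = j
      · subst h
        simp only [Matrix.of_apply, if_true, eq_self_iff_true]
        rw [Matrix.charmatrix_apply_eq, Ldiag, i.2]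
      · have hij : (i : Fin N) ≠ (j : Fin N) := fun e => h (Subtype.ext e)
        simp only [Matrix.of_apply, if_neg h]
        rw [Matrix.charmatrix_apply_ne _ _ _ hij, Loff _ _ hij (by rw [i.2, j.2]), i.2, map_neg,
          neg_neg]
    rw [hbm, detBlock (n k) hcard (by have := hn k; omega) (w k)]
  rw [Finset.prod_congr rfl fun k _ => hblock k, Finset.prod_mul_distrib, Finset.prod_const,
    Finset.card_univ, Fintype.card_fin, mul_comm]
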